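/- Let n ≥ 4k + 1 and k ≥ 1, let σ be a permutation of ZMod n and x = x(σ) the corresponding 2k-NN graph. For distinct vertices j, j', let d = d_x(j, j') be the cyclic distance between σ⁻¹(j) and σ⁻¹(j'). Then the number of common neighbors of j and j' in x equals 2k − 1 − d if 1 ≤ d ≤ k, equals 2k + 1 − d if k < d ≤ 2k, and equals 0 if d > 2k. -/

import Mathlib

open MeasureTheory Filter
open scoped ENNReal NNReal

noncomputable section

/-- Cyclic distance on `ZMod n`: `min(m, n-m)` where `m` is the representative of `a-b`. -/
def cycDist {n : ℕ} (a b : ZMod n) : ℕ := min (a - b).val (b - a).val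

/-- The `2k`-nearest-neighbor graph on `ZMod n` associated to a permutation `σ`. -/
def knnGraph (n k : ℕ) (σ : Equiv.Perm (ZMod n)) : SimpleGraph (ZMod n) where
  Adj u v := u ≠ v ∧ cycDist (σ.symm u) (σ.symm v) ≤ k
  symm := by
    refine ⟨fun u v h => ?_⟩
    refine ⟨h.1.symm, ?_⟩
    unfold cycDist at *
    omega
  loopless := by refine ⟨fun u h => ?_⟩; exact h.1 rfl

/-- The set of all `2k`-NN graphs on `ZMod n`. -/
def knnGraphs (n k : ℕ) : Set (SimpleGraph (ZMod n)) := Set.range (knnGraph n k)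

/-- The hidden `2k`-NN graph: the one associated to the identity permutation. -/
def xstar (n k : ℕ) : SimpleGraph (ZMod n) := knnGraph n k (Equiv.refl _)

/-- Hamming distance between two graphs: the number of unordered pairs adjacent in
exactly one of them. -/
def gdist {n : ℕ} (x y : SimpleGraph (ZMod n)) : ℕ := (symmDiff x.edgeSet y.edgeSet).ncard

/-- `2k`-NN graphs at Hamming distance `2Δ` from the hidden one. -/
def XDelta (n k Δ : ℕ) : Set (SimpleGraph (ZMod n)) :=
  {x | x ∈ knnGraphs n k ∧ gdist x (xstar n k) = 2 * Δ}

open scoped Classical in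
/-- The hidden `2k`-NN graph model: independent edge weights, with law `P` on the edges of
the hidden graph `x` and law `Q` elsewhere. -/
def edgeMeasure (n : ℕ) (P Q : Measure ℝ) (x : SimpleGraph (ZMod n)) :
    Measure (Sym2 (ZMod n) → ℝ) :=
  if h : n = 0 then 0 else
    haveI : NeZero n := ⟨h⟩
    Measure.pi fun e => if e ∈ x.edgeSet then P else Q

/-- `⟨L, x⟩ = Σ_{e edge of x} log (dP/dQ)(w_e)`. -/
def score (n : ℕ) (P Q : Measure ℝ) (x : SimpleGraph (ZMod n))
    (w : Sym2 (ZMod n) → ℝ) : ℝ :=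
  ∑ᶠ e ∈ x.edgeSet, llr P Q (w e)

/-- `Σ_{e edge of x} w_e`. -/
def wsum (n : ℕ) (x : SimpleGraph (ZMod n)) (w : Sym2 (ZMod n) → ℝ) : ℝ :=
  ∑ᶠ e ∈ x.edgeSet, w e

/-- The order-1/2 Rényi divergence `α(P,Q) = -2 log ∫ √(dP/dQ) dQ`. -/
def renyiHalf (P Q : Measure ℝ) : ℝ :=
  -2 * Real.log (∫ t, Real.sqrt ((P.rnDeriv Q) t).toReal ∂Q)

/-- The Kullback-Leibler divergence `D(P‖Q) = ∫ log (dP/dQ) dP`. -/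
def klDivR (P Q : Measure ℝ) : ℝ := ∫ t, llr P Q t ∂P



section CommonNeighborsAux

variable {n : ℕ}

private lemma cycDist_comm' (a b : ZMod n) : cycDist a b = cycDist b a := min_comm _ _

private lemma cycDist_shift' (x y z : ZMod n) : cycDist (x + z) (y + z) = cycDist x y := by
  unfold cycDist
  rw [add_sub_add_right_eq_sub, show y + z - (x + z) = y - x by ring]

private lemma cycDist_neg' (x y : ZMod n) : cycDist (-x) (-y) = cycDist x y := by
  unfold cycDist
  rw [show -x - -y = y - x by ring, show -y - -x = x - y by ring, min_comm]

private lemma cycDist_val' [NeZero n] (a b : ZMod n) :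
    cycDist a b = min ((a.val - b.val) + (b.val - a.val))
      (n - ((a.val - b.val) + (b.val - a.val))) := by
  rcases le_total b.val a.val with h | h
  · rcases eq_or_ne a b with rfl | hab
    · simp [cycDist]
    · have h1 : (a - b).val = a.val - b.val := ZMod.val_sub h
      have h2 : b - a = -(a - b) := by ring
      have h3 : a - b ≠ 0 := sub_ne_zero_of_ne hab
      have h4 : (b - a).val = n - (a.val - b.val) := by
        rw [h2, ZMod.neg_val, if_neg h3, h1]
      unfold cycDist
      omega
  · rw [cycDist_comm']
    rcases eq_or_ne b a with rfl | hab
    · simp [cycDist]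
    · have h1 : (b - a).val = b.val - a.val := ZMod.val_sub h
      have h2 : a - b = -(b - a) := by ring
      have h3 : b - a ≠ 0 := sub_ne_zero_of_ne hab
      have h4 : (a - b).val = n - (b.val - a.val) := by
        rw [h2, ZMod.neg_val, if_neg h3, h1]
      unfold cycDist
      omega

open scoped Classical in
private lemma count_main' (k d : ℕ) [NeZero n] (hk : 1 ≤ k) (hn : 4 * k + 1 ≤ n)
    (m : ZMod n) (hm : m.val = d) (hd1 : 1 ≤ d) (hd2 : 2 * d ≤ n) :
    {c : ZMod n | c ≠ 0 ∧ c ≠ m ∧ cycDist c 0 ≤ k ∧ cycDist c m ≤ k}.ncard =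
      if d ≤ k then 2 * k - 1 - d else if d ≤ 2 * k then 2 * k + 1 - d else 0 := by
  have hnn : 0 < n := Nat.pos_of_ne_zero (NeZero.ne n)
  set Q : ℕ → Prop := fun t =>
    t ≠ 0 ∧ t ≠ d ∧ (t ≤ k ∨ n - t ≤ k) ∧
      ((t - d) + (d - t) ≤ k ∨ n - ((t - d) + (d - t)) ≤ k) with hQ
  have hset : {c : ZMod n | c ≠ 0 ∧ c ≠ m ∧ cycDist c 0 ≤ k ∧ cycDist c m ≤ k} =
      ↑(((Finset.range n).filter Q).image (fun t : ℕ => (t : ZMod n))) := by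
    ext c
    simp only [Set.mem_setOf_eq, Finset.coe_image, Set.mem_image, Finset.mem_coe,
      Finset.mem_filter, Finset.mem_range]
    constructor
    · rintro ⟨h0, hm', h1, h2⟩
      refine ⟨c.val, ⟨c.val_lt, ?_, ?_, ?_, ?_⟩, by simp [ZMod.natCast_val, ZMod.cast_id]⟩
      · simpa [ZMod.val_eq_zero] using h0
      · intro h; exact hm' (ZMod.val_injective _ (by rw [h, hm]))
      · rw [cycDist_val'] at h1; simp [ZMod.val_zero] at h1; omega
      · rw [cycDist_val', hm] at h2; omega
    · rintro ⟨t, ⟨htn, ht0, htd, ht1, ht2⟩, rfl⟩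
      have hv : ((t : ZMod n)).val = t := ZMod.val_cast_of_lt htn
      refine ⟨?_, ?_, ?_, ?_⟩
      · simp [Ne, ← ZMod.val_eq_zero, hv, ht0]
      · intro h; exact htd (by rw [← hv, h, hm])
      · rw [cycDist_val']; simp [ZMod.val_zero, hv]; omega
      · rw [cycDist_val', hm, hv]; omega
  rw [hset, Set.ncard_coe_finset, Finset.card_image_of_injOn]
  · have hd' : d < n := by omega
    rcases le_or_gt d k with hdk | hdk
    · rw [if_pos hdk]
      have : (Finset.range n).filter Q =
          (Finset.Icc 1 k).erase d ∪ Finset.Icc (n - k + d) (n - 1) := by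
        ext t
        simp only [Finset.mem_filter, Finset.mem_range, Finset.mem_union, Finset.mem_erase,
          Finset.mem_Icc, hQ]
        omega
      rw [this, Finset.card_union_of_disjoint, Finset.card_erase_of_mem (by
        simp [Finset.mem_Icc]; omega), Nat.card_Icc, Nat.card_Icc]
      · omega
      · rw [Finset.disjoint_left]
        intro t ht ht'
        simp only [Finset.mem_erase, Finset.mem_Icc] at ht ht'
        omega
    · rcases le_or_gt d (2 * k) with hd2k | hd2k
      · rw [if_neg (by omega), if_pos hd2k]
        have : (Finset.range n).filter Q = Finset.Icc (d - k) k := by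
          ext t
          simp only [Finset.mem_filter, Finset.mem_range, Finset.mem_Icc, hQ]
          omega
        rw [this, Nat.card_Icc]; omega
      · rw [if_neg (by omega), if_neg (by omega)]
        have : (Finset.range n).filter Q = ∅ := by
          ext t
          simp only [Finset.mem_filter, Finset.mem_range, Finset.notMem_empty, iff_false, hQ]
          push_neg
          intro h1 h2 h3 h4
          omega
        simp [this]
  · intro s hs t ht h
    simp only [Finset.coe_filter, Set.mem_setOf_eq, Finset.mem_range] at hs ht
    rw [← ZMod.val_cast_of_lt hs.1, ← ZMod.val_cast_of_lt ht.1]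
    exact congrArg ZMod.val h

end CommonNeighborsAux

/-- **Number of common neighbors in a `2k`-NN graph (Fact 3 in the proof of Lemma 5).**
For `n ≥ 4k+1`, distinct vertices `j, j\'` at cyclic distance `d` (along the Hamiltonian
cycle of `σ`) have `2k-1-d` common neighbors if `1 ≤ d ≤ k`, `2k+1-d` common neighbors if
`k < d ≤ 2k`, and none if `d > 2k`. -/
theorem common_neighbors_card (n k : ℕ) (hk : 1 ≤ k) (hn : 4 * k + 1 ≤ n)
    (σ : Equiv.Perm (ZMod n)) (j j' : ZMod n) (hjj : j ≠ j') :
    (1 ≤ cycDist (σ.symm j) (σ.symm j') → cycDist (σ.symm j) (σ.symm j') ≤ k →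
      ((knnGraph n k σ).neighborSet j ∩ (knnGraph n k σ).neighborSet j').ncard
        = 2 * k - 1 - cycDist (σ.symm j) (σ.symm j')) ∧
    (k < cycDist (σ.symm j) (σ.symm j') → cycDist (σ.symm j) (σ.symm j') ≤ 2 * k →
      ((knnGraph n k σ).neighborSet j ∩ (knnGraph n k σ).neighborSet j').ncard
        = 2 * k + 1 - cycDist (σ.symm j) (σ.symm j')) ∧
    (2 * k < cycDist (σ.symm j) (σ.symm j') →
      ((knnGraph n k σ).neighborSet j ∩ (knnGraph n k σ).neighborSet j').ncard = 0) := by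
  have hNZ : NeZero n := ⟨by omega⟩
  set a := σ.symm j with ha
  set b := σ.symm j' with hb
  have hab : a ≠ b := fun h => hjj (by
    rw [← Equiv.apply_symm_apply σ j, ← Equiv.apply_symm_apply σ j', ← ha, ← hb, h])
  set m := b - a with hmdef
  have hm0 : m ≠ 0 := sub_ne_zero_of_ne hab.symm
  have key : ((knnGraph n k σ).neighborSet j ∩ (knnGraph n k σ).neighborSet j')
      = (fun c => σ (c + a)) ''
        {c : ZMod n | c ≠ 0 ∧ c ≠ m ∧ cycDist c 0 ≤ k ∧ cycDist c m ≤ k} := by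
    ext u
    simp only [Set.mem_inter_iff, SimpleGraph.mem_neighborSet, knnGraph, Set.mem_image,
      Set.mem_setOf_eq]
    rw [← ha, ← hb]
    constructor
    · rintro ⟨⟨h1, h2⟩, h3, h4⟩
      have e1 : σ.symm u - a + a = σ.symm u := by ring
      have e2 : m + a = b := by rw [hmdef]; ring
      refine ⟨σ.symm u - a, ⟨?_, ?_, ?_, ?_⟩, ?_⟩
      · refine sub_ne_zero_of_ne (fun h => h1 ?_)
        rw [ha] at h
        exact (σ.symm.injective h).symm
      · intro h
        rw [hmdef, sub_left_inj] at h
        rw [hb] at h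
        exact h3 (σ.symm.injective h).symm
      · have hs := cycDist_shift' (σ.symm u - a) 0 a
        rw [e1, zero_add] at hs
        rw [← hs, cycDist_comm']
        exact h2
      · have hs := cycDist_shift' (σ.symm u - a) m a
        rw [e1, e2] at hs
        rw [← hs, cycDist_comm']
        exact h4
      · rw [e1, Equiv.apply_symm_apply]
    · rintro ⟨c, ⟨hc0, hcm, hc1, hc2⟩, rfl⟩
      have hσ : σ.symm (σ (c + a)) = c + a := Equiv.symm_apply_apply σ _
      have e2 : m + a = b := by rw [hmdef]; ring
      refine ⟨⟨?_, ?_⟩, ?_, ?_⟩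
      · intro h
        apply hc0
        have h' : a = c + a := by conv_lhs => rw [ha, h, hσ]
        rwa [right_eq_add] at h'
      · rw [hσ]
        have hs := cycDist_shift' 0 c a
        rw [zero_add] at hs
        rw [hs, cycDist_comm']
        exact hc1
      · intro h
        apply hcm
        have h' : b = c + a := by conv_lhs => rw [hb, h, hσ]
        rw [hmdef, h']
        ring
      · rw [hσ]
        have hs := cycDist_shift' m c a
        rw [e2] at hs
        rw [hs, cycDist_comm']
        exact hc2
  have hinj : Function.Injective (fun c : ZMod n => σ (c + a)) := by
    intro x y h
    have h' := σ.injective h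
    simpa using congrArg (· - a) h'
  have hd0 : cycDist a b = cycDist m 0 := by
    have hs := cycDist_shift' m 0 a
    have e2 : m + a = b := by rw [hmdef]; ring
    rw [e2, zero_add] at hs
    rw [← hs, cycDist_comm']
  have hmv : m.val ≠ 0 := by simpa [ZMod.val_eq_zero] using hm0
  have hmvlt : m.val < n := m.val_lt
  have hnegv : (-m).val = n - m.val := by rw [ZMod.neg_val, if_neg hm0]
  have hdm : cycDist m 0 = min m.val (n - m.val) := by
    unfold cycDist
    rw [sub_zero, zero_sub, hnegv]
  have hdd : cycDist a b = min m.val (n - m.val) := hd0.trans hdm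
  set d := cycDist a b with hd
  have hd1 : 1 ≤ d := by omega
  have hd2 : 2 * d ≤ n := by omega
  have hcard : ((knnGraph n k σ).neighborSet j ∩ (knnGraph n k σ).neighborSet j').ncard
      = if d ≤ k then 2 * k - 1 - d else if d ≤ 2 * k then 2 * k + 1 - d else 0 := by
    rw [key, Set.ncard_image_of_injective _ hinj]
    rcases le_or_gt (m.val) (n - m.val) with hcase | hcase
    · exact count_main' k d hk hn m (by omega) hd1 hd2
    · have hneg : {c : ZMod n | c ≠ 0 ∧ c ≠ m ∧ cycDist c 0 ≤ k ∧ cycDist c m ≤ k}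
          = Neg.neg '' {c : ZMod n | c ≠ 0 ∧ c ≠ -m ∧ cycDist c 0 ≤ k ∧ cycDist c (-m) ≤ k} := by
        ext c
        simp only [Set.mem_setOf_eq, Set.mem_image]
        constructor
        · rintro ⟨h1, h2, h3, h4⟩
          refine ⟨-c, ⟨neg_ne_zero.2 h1, by simpa using h2, ?_, ?_⟩, neg_neg c⟩
          · rw [← neg_zero, cycDist_neg']; exact h3
          · rw [cycDist_neg']; exact h4
        · rintro ⟨c', ⟨h1, h2, h3, h4⟩, rfl⟩
          refine ⟨neg_ne_zero.2 h1, ?_, ?_, ?_⟩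
          · intro h
            exact h2 (by rw [← h, neg_neg])
          · rw [← neg_zero, cycDist_neg']; exact h3
          · rw [show m = -(-m) by ring, cycDist_neg']; exact h4
      rw [hneg, Set.ncard_image_of_injective _ neg_injective]
      exact count_main' k d hk hn (-m) (by omega) hd1 hd2
  refine ⟨?_, ?_, ?_⟩
  · intro h1 h2
    rw [hcard, if_pos h2]
  · intro h1 h2
    rw [hcard, if_neg (by omega), if_pos h2]
  · intro h1
    rw [hcard, if_neg (by omega), if_neg (by omega)]

end
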